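/- Every finite digraph G = (V, A) has an injective overlap labeling of length at most 2^(p+1) − 1, where p = max{Δ⁺(G), Δ⁻(G)}. Consequently, the readability of every digraph is well-defined (finite). -/

import Mathlib

/-- `OvAt s t k` : `s` overlaps `t` by `k`, i.e. `k` is positive, at most both lengths,
and the length-`k` suffix of `s` equals the length-`k` prefix of `t`. -/
def OvAt {α : Type} (s t : List α) (k : ℕ) : Prop :=
  0 < k ∧ k ≤ s.length ∧ k ≤ t.length ∧ s.drop (s.length - k) = t.take k

/-- `s` overlaps `t` (by some positive length). -/
def Overlaps {α : Type} (s t : List α) : Prop := ∃ k, OvAt s t k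

/-- the minimum positive overlap length of `s` over `t` (0 if none exists). -/
noncomputable def ovMin {α : Type} (s t : List α) : ℕ := sInf {k | OvAt s t k}

/-- A bipartite graph, given as a relation `E` between the two parts `S` and `T`,
has an overlap labeling with all strings of length `k`. -/
def HasOLab {S T : Type} (E : S → T → Prop) (k : ℕ) : Prop :=
  ∃ (α : Type) (ℓS : S → List α) (ℓT : T → List α),
    (∀ u, (ℓS u).length = k) ∧ (∀ v, (ℓT v).length = k) ∧
    ∀ u v, E u v ↔ Overlaps (ℓS u) (ℓT v)

/-- The readability of a bipartite graph: minimum length of an overlap labeling. -/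
noncomputable def readability {S T : Type} (E : S → T → Prop) : ℕ :=
  sInf {k | HasOLab E k}


open Finset

section Konig
variable {V : Type} [Fintype V] [DecidableEq V]

/-- out-degree of a multigraph given as a finset of (src, tgt, id) triples -/
private def odeg (s : Finset (V × V × ℕ)) (u : V) : ℕ := #(s.filter fun e => e.1 = u)
private def ideg (s : Finset (V × V × ℕ)) (v : V) : ℕ := #(s.filter fun e => e.2.1 = v)

private lemma card_eq_sum_odeg (s : Finset (V × V × ℕ)) : #s = ∑ u, odeg s u :=
  Finset.card_eq_sum_card_fiberwise (fun x _ => Finset.mem_univ x.1)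

private lemma card_eq_sum_ideg (s : Finset (V × V × ℕ)) : #s = ∑ v, ideg s v :=
  Finset.card_eq_sum_card_fiberwise (fun x _ => Finset.mem_univ x.2.1)

/-- realize any two degree sequences with equal sums by a multigraph with ids in [B, B+n) -/
private lemma pad (n : ℕ) : ∀ (f g : V → ℕ) (B : ℕ), (∑ u, f u = n) → (∑ u, g u = n) →
    ∃ s : Finset (V × V × ℕ), (∀ e ∈ s, B ≤ e.2.2 ∧ e.2.2 < B + n) ∧
      (∀ u, odeg s u = f u) ∧ (∀ v, ideg s v = g v) := by
  induction n with
  | zero =>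
    intro f g B hf hg
    refine ⟨∅, by simp, fun u => ?_, fun v => ?_⟩
    · have : f u = 0 := Finset.sum_eq_zero_iff.mp hf u (Finset.mem_univ u)
      simp [odeg, this]
    · have : g v = 0 := Finset.sum_eq_zero_iff.mp hg v (Finset.mem_univ v)
      simp [ideg, this]
  | succ n ih =>
    intro f g B hf hg
    have hfu : ∃ u, f u ≠ 0 := by
      by_contra h; push_neg at h; simp [h] at hf
    have hgv : ∃ v, g v ≠ 0 := by
      by_contra h; push_neg at h; simp [h] at hg
    obtain ⟨u₀, hu₀⟩ := hfu
    obtain ⟨v₀, hv₀⟩ := hgv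
    set f' := Function.update f u₀ (f u₀ - 1) with hf'def
    set g' := Function.update g v₀ (g v₀ - 1) with hg'def
    have hsf : ∑ u, f' u = n := by
      have h1 := Finset.sum_update_of_mem (Finset.mem_univ u₀) f (f u₀ - 1)
      have h2 := Finset.sum_eq_sum_sdiff_singleton_add (Finset.mem_univ u₀) f
      rw [hf'def, h1]; omega
    have hsg : ∑ v, g' v = n := by
      have h1 := Finset.sum_update_of_mem (Finset.mem_univ v₀) g (g v₀ - 1)
      have h2 := Finset.sum_eq_sum_sdiff_singleton_add (Finset.mem_univ v₀) g
      rw [hg'def, h1]; omega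
    obtain ⟨s, hB, ho, hi⟩ := ih f' g' B hsf hsg
    have hfresh : (u₀, v₀, B + n) ∉ s := by
      intro h; have := (hB _ h).2; simp at this
    refine ⟨insert (u₀, v₀, B + n) s, ?_, fun u => ?_, fun v => ?_⟩
    · intro e he
      rcases Finset.mem_insert.mp he with h | h
      · subst h
        show B ≤ (u₀, v₀, B + n).2.2 ∧ (u₀, v₀, B + n).2.2 < B + (n + 1)
        show B ≤ B + n ∧ B + n < B + (n + 1)
        omega
      · have := hB e h; omega
    · by_cases h : u = u₀
      · subst h
        have hfil : (insert (u, v₀, B + n) s).filter (fun e => e.1 = u)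
            = insert (u, v₀, B + n) (s.filter fun e => e.1 = u) := by
          rw [Finset.filter_insert, if_pos rfl]
        rw [odeg, hfil, Finset.card_insert_of_notMem
          (fun hc => hfresh (Finset.mem_filter.mp hc).1)]
        have h2 : odeg s u = f u - 1 := by
          rw [ho u, hf'def, Function.update_self]
        rw [odeg] at h2
        omega
      · have hfil : (insert (u₀, v₀, B + n) s).filter (fun e => e.1 = u)
            = s.filter fun e => e.1 = u := by
          rw [Finset.filter_insert, if_neg (fun hc => h hc.symm)]
        rw [odeg, hfil]
        have h2 : odeg s u = f u := by
          rw [ho u, hf'def, Function.update_of_ne h]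
        rw [odeg] at h2
        exact h2
    · by_cases h : v = v₀
      · subst h
        have hfil : (insert (u₀, v, B + n) s).filter (fun e => e.2.1 = v)
            = insert (u₀, v, B + n) (s.filter fun e => e.2.1 = v) := by
          rw [Finset.filter_insert, if_pos rfl]
        rw [ideg, hfil, Finset.card_insert_of_notMem
          (fun hc => hfresh (Finset.mem_filter.mp hc).1)]
        have h2 : ideg s v = g v - 1 := by
          rw [hi v, hg'def, Function.update_self]
        rw [ideg] at h2
        omega
      · have hfil : (insert (u₀, v₀, B + n) s).filter (fun e => e.2.1 = v)
            = s.filter fun e => e.2.1 = v := by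
          rw [Finset.filter_insert, if_neg (fun hc => h hc.symm)]
        rw [ideg, hfil]
        have h2 : ideg s v = g v := by
          rw [hi v, hg'def, Function.update_of_ne h]
        rw [ideg] at h2
        exact h2

/-- proper edge coloring of a p-regular bipartite multigraph with p colors -/
private lemma regColor : ∀ (p : ℕ) (s : Finset (V × V × ℕ)),
    (∀ u, odeg s u = p) → (∀ v, ideg s v = p) →
    ∃ c : V × V × ℕ → ℕ, (∀ e ∈ s, c e < p) ∧
      (∀ e ∈ s, ∀ e' ∈ s, c e = c e' → (e.1 = e'.1 ∨ e.2.1 = e'.2.1) → e = e') := by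
  intro p
  induction p with
  | zero =>
    intro s ho _
    have hs : s = ∅ := by
      rw [← Finset.card_eq_zero, card_eq_sum_odeg]
      simp [ho]
    subst hs
    exact ⟨fun _ => 0, by simp, by simp⟩
  | succ p ih =>
    intro s ho hi
    classical
    set t : V → Finset V := fun u => (s.filter fun e => e.1 = u).image fun e => e.2.1 with ht
    have hall : ∀ A : Finset V, #A ≤ #(A.biUnion t) := by
      intro A
      have h1 : #(s.filter fun e => e.1 ∈ A) = ∑ u ∈ A, odeg s u := by
        rw [Finset.card_eq_sum_card_fiberwise
          (s := s.filter fun e => e.1 ∈ A) (f := fun e : V × V × ℕ => e.1) (t := A) (fun e he => (Finset.mem_filter.mp he).2)]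
        apply Finset.sum_congr rfl
        intro u hu
        rw [odeg]
        congr 1
        ext e
        simp only [Finset.mem_filter]
        constructor
        · rintro ⟨⟨h1, _⟩, h3⟩; exact ⟨h1, h3⟩
        · rintro ⟨h1, h3⟩; exact ⟨⟨h1, h3 ▸ hu⟩, h3⟩
      have h2 : #(s.filter fun e => e.2.1 ∈ A.biUnion t) = ∑ v ∈ A.biUnion t, ideg s v := by
        rw [Finset.card_eq_sum_card_fiberwise
          (s := s.filter fun e => e.2.1 ∈ A.biUnion t) (f := fun e : V × V × ℕ => e.2.1) (t := A.biUnion t) (fun e he => (Finset.mem_filter.mp he).2)]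
        apply Finset.sum_congr rfl
        intro v hv
        rw [ideg]
        congr 1
        ext e
        simp only [Finset.mem_filter]
        constructor
        · rintro ⟨⟨h1, _⟩, h3⟩; exact ⟨h1, h3⟩
        · rintro ⟨h1, h3⟩; exact ⟨⟨h1, h3 ▸ hv⟩, h3⟩
      have h3 : (s.filter fun e => e.1 ∈ A) ⊆ (s.filter fun e => e.2.1 ∈ A.biUnion t) := by
        intro e he
        rcases Finset.mem_filter.mp he with ⟨hes, heA⟩
        refine Finset.mem_filter.mpr ⟨hes, Finset.mem_biUnion.mpr ⟨e.1, heA, ?_⟩⟩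
        rw [ht]
        exact Finset.mem_image.mpr ⟨e, Finset.mem_filter.mpr ⟨hes, rfl⟩, rfl⟩
      have hcard := Finset.card_le_card h3
      rw [h1, h2] at hcard
      have e1 : ∑ u ∈ A, odeg s u = #A * (p + 1) := by
        rw [Finset.sum_congr rfl (fun u _ => ho u), Finset.sum_const, smul_eq_mul]
      have e2 : ∑ v ∈ A.biUnion t, ideg s v = #(A.biUnion t) * (p + 1) := by
        rw [Finset.sum_congr rfl (fun v _ => hi v), Finset.sum_const, smul_eq_mul]
      rw [e1, e2] at hcard
      exact Nat.le_of_mul_le_mul_right hcard (Nat.succ_pos p)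
    obtain ⟨F, hFinj, hFt⟩ := (Finset.all_card_le_biUnion_card_iff_existsInjective' t).mp hall
    have hpick : ∀ u, ∃ e, e ∈ s ∧ e.1 = u ∧ e.2.1 = F u := by
      intro u
      have := hFt u
      rw [ht] at this
      simp only [Finset.mem_image, Finset.mem_filter] at this
      obtain ⟨e, ⟨hes, he1⟩, he2⟩ := this
      exact ⟨e, hes, he1, he2⟩
    choose pk hpk1 hpk2 hpk3 using hpick
    have hpkinj : Function.Injective pk := by
      intro a b h
      rw [← hpk2 a, ← hpk2 b, h]
    set M : Finset (V × V × ℕ) := Finset.univ.image pk with hM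
    set s' := s \ M with hs'
    have hMs : M ⊆ s := by
      intro e he
      rw [hM] at he
      obtain ⟨u, _, rfl⟩ := Finset.mem_image.mp he
      exact hpk1 u
    have ho' : ∀ u, odeg s' u = p := by
      intro u
      have key : s'.filter (fun e => e.1 = u) = (s.filter (fun e => e.1 = u)).erase (pk u) := by
        ext e
        simp only [hs', hM, Finset.mem_filter, Finset.mem_sdiff, Finset.mem_erase,
          Finset.mem_image, Finset.mem_univ, true_and]
        constructor
        · rintro ⟨⟨hes, hnm⟩, h1⟩
          exact ⟨fun hc => hnm ⟨u, hc.symm⟩, ⟨hes, h1⟩⟩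
        · rintro ⟨hne, hes, h1⟩
          refine ⟨⟨hes, ?_⟩, h1⟩
          rintro ⟨u', rfl⟩
          have : u' = u := by rw [← hpk2 u', h1]
          subst this
          exact hne rfl
      rw [odeg, key, Finset.card_erase_of_mem
        (Finset.mem_filter.mpr ⟨hpk1 u, hpk2 u⟩)]
      have := ho u
      rw [odeg] at this
      omega
    have hFbij : Function.Bijective F := Finite.injective_iff_bijective.mp hFinj
    have hi' : ∀ v, ideg s' v = p := by
      intro v
      obtain ⟨w, hw⟩ := hFbij.2 v
      have key : s'.filter (fun e => e.2.1 = v) = (s.filter (fun e => e.2.1 = v)).erase (pk w) := by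
        ext e
        simp only [hs', hM, Finset.mem_filter, Finset.mem_sdiff, Finset.mem_erase,
          Finset.mem_image, Finset.mem_univ, true_and]
        constructor
        · rintro ⟨⟨hes, hnm⟩, h1⟩
          exact ⟨fun hc => hnm ⟨w, hc.symm⟩, ⟨hes, h1⟩⟩
        · rintro ⟨hne, hes, h1⟩
          refine ⟨⟨hes, ?_⟩, h1⟩
          rintro ⟨u', rfl⟩
          have : F u' = v := by rw [← hpk3 u', h1]
          have : u' = w := hFinj (this.trans hw.symm)
          subst this
          exact hne rfl
      rw [ideg, key, Finset.card_erase_of_mem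
        (Finset.mem_filter.mpr ⟨hpk1 w, by rw [hpk3 w, hw]⟩)]
      have := hi v
      rw [ideg] at this
      omega
    obtain ⟨c', hc'lt, hc'prop⟩ := ih s' ho' hi'
    refine ⟨fun e => if e ∈ M then p else c' e, ?_, ?_⟩
    · intro e he
      by_cases h : e ∈ M
      · simp [h]
      · simp only [if_neg h]
        exact Nat.lt_succ_of_lt (hc'lt e (Finset.mem_sdiff.mpr ⟨he, h⟩))
    · intro e he e' he' hcc hside
      by_cases h : e ∈ M <;> by_cases h' : e' ∈ M
      · rw [hM] at h h'
        obtain ⟨a, _, rfl⟩ := Finset.mem_image.mp h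
        obtain ⟨b, _, rfl⟩ := Finset.mem_image.mp h'
        rcases hside with hs1 | hs2
        · rw [hpk2 a, hpk2 b] at hs1; rw [hs1]
        · rw [hpk3 a, hpk3 b] at hs2; rw [hFinj hs2]
      · exfalso
        have hcc' : (if e ∈ M then p else c' e) = (if e' ∈ M then p else c' e') := hcc
        rw [if_pos h, if_neg h'] at hcc'
        have := hc'lt e' (Finset.mem_sdiff.mpr ⟨he', h'⟩)
        omega
      · exfalso
        have hcc' : (if e ∈ M then p else c' e) = (if e' ∈ M then p else c' e') := hcc
        rw [if_neg h, if_pos h'] at hcc'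
        have := hc'lt e (Finset.mem_sdiff.mpr ⟨he, h⟩)
        omega
      · have hcc' : (if e ∈ M then p else c' e) = (if e' ∈ M then p else c' e') := hcc
        rw [if_neg h, if_neg h'] at hcc'
        exact hc'prop e (Finset.mem_sdiff.mpr ⟨he, h⟩) e' (Finset.mem_sdiff.mpr ⟨he', h'⟩)
          hcc' hside

/-- König edge coloring: a bipartite multigraph with degrees ≤ p has a proper p-edge-coloring -/
private lemma konig (p : ℕ) (s : Finset (V × V × ℕ)) (h0 : ∀ e ∈ s, e.2.2 = 0)
    (ho : ∀ u, odeg s u ≤ p) (hi : ∀ v, ideg s v ≤ p) :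
    ∃ c : V × V × ℕ → ℕ, (∀ e ∈ s, c e < p) ∧
      (∀ e ∈ s, ∀ e' ∈ s, c e = c e' → (e.1 = e'.1 ∨ e.2.1 = e'.2.1) → e = e') := by
  classical
  set f : V → ℕ := fun u => p - odeg s u with hf
  set g : V → ℕ := fun v => p - ideg s v with hg
  have e1 : ∑ u, (f u + odeg s u) = ∑ _u : V, p :=
    Finset.sum_congr rfl (fun u _ => by
      have := ho u
      show p - odeg s u + odeg s u = p
      omega)
  have e2 : ∑ v, (g v + ideg s v) = ∑ _v : V, p :=
    Finset.sum_congr rfl (fun v _ => by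
      have := hi v
      show p - ideg s v + ideg s v = p
      omega)
  rw [Finset.sum_add_distrib] at e1 e2
  have hco := card_eq_sum_odeg s
  have hci := card_eq_sum_ideg s
  have hsum : ∑ v, g v = ∑ u, f u := by omega
  obtain ⟨s₂, hB2, ho2, hi2⟩ := pad (∑ u, f u) f g 1 rfl hsum
  have hdisj : Disjoint s s₂ := by
    rw [Finset.disjoint_left]
    intro e he he2
    have := h0 e he
    have := (hB2 e he2).1
    omega
  have hounion : ∀ u, odeg (s ∪ s₂) u = p := by
    intro u
    rw [odeg, Finset.filter_union, Finset.card_union_of_disjoint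
      (Finset.disjoint_filter_filter hdisj)]
    have h1 : odeg s₂ u = p - odeg s u := ho2 u
    have h2 := ho u
    simp only [odeg] at h1 h2 ⊢
    omega
  have hiunion : ∀ v, ideg (s ∪ s₂) v = p := by
    intro v
    rw [ideg, Finset.filter_union, Finset.card_union_of_disjoint
      (Finset.disjoint_filter_filter hdisj)]
    have h1 : ideg s₂ v = p - ideg s v := hi2 v
    have h2 := hi v
    simp only [ideg] at h1 h2 ⊢
    omega
  obtain ⟨c, hclt, hcprop⟩ := regColor p (s ∪ s₂) hounion hiunion
  exact ⟨c, fun e he => hclt e (Finset.mem_union_left _ he),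
    fun e he e' he' => hcprop e (Finset.mem_union_left _ he) e' (Finset.mem_union_left _ he')⟩

end Konig

section Strings
variable {V : Type}

/-- the nested prefix/suffix blocks: `(PS fO fI i v).1` is the level-`i` prefix block of `v`
(encoding in-arcs at levels ≤ i), `.2` the level-`i` suffix block (encoding out-arcs). -/
def PS (fO fI : ℕ → V → Option V) : ℕ → V → List (ℕ × ℕ × ℕ × V) × List (ℕ × ℕ × ℕ × V)
  | 0 => fun _ => ([], [])
  | (i+1) => fun v =>
      ((PS fO fI i v).1 ++ (match fI (i+1) v with
          | some u => (1, i+1, 0, u) :: (PS fO fI i u).2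
          | none => (List.range (2^i)).map fun j => (3, i+1, j, v)),
       (match fO (i+1) v with
          | some w => (PS fO fI i w).1 ++ [(1, i+1, 0, v)]
          | none => (List.range (2^i)).map fun j => (2, i+1, j, v)) ++ (PS fO fI i v).2)

variable (fO fI : ℕ → V → Option V)

lemma PS_len (i : ℕ) : ∀ v : V,
    ((PS fO fI i v).1.length = 2^i - 1) ∧ ((PS fO fI i v).2.length = 2^i - 1) := by
  induction i with
  | zero => intro v; simp [PS]
  | succ i ih =>
    intro v
    have h2 : 1 ≤ 2^i := Nat.one_le_two_pow
    constructor
    · rcases hI : fI (i+1) v with _ | u <;>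
        simp [PS, hI, (ih v).1, (ih _).2, pow_succ] <;> omega
    · rcases hO : fO (i+1) v with _ | w <;>
        simp [PS, hO, (ih v).2, (ih _).1, pow_succ] <;> omega

lemma PS_P_prefix {i j : ℕ} (h : i ≤ j) (v : V) :
    (PS fO fI i v).1 <+: (PS fO fI j v).1 := by
  induction j, h using Nat.le_induction with
  | base => exact List.prefix_rfl
  | succ j hj ih =>
    refine ih.trans ?_
    show (PS fO fI j v).1 <+: (PS fO fI (j+1) v).1
    rw [show (PS fO fI (j+1) v).1 = (PS fO fI j v).1 ++ _ from rfl]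
    exact List.prefix_append _ _

lemma PS_S_suffix {i j : ℕ} (h : i ≤ j) (v : V) :
    (PS fO fI i v).2 <:+ (PS fO fI j v).2 := by
  induction j, h using Nat.le_induction with
  | base => exact List.suffix_rfl
  | succ j hj ih =>
    refine ih.trans ?_
    show (PS fO fI j v).2 <:+ (PS fO fI (j+1) v).2
    rw [show (PS fO fI (j+1) v).2 = _ ++ (PS fO fI j v).2 from rfl]
    exact List.suffix_append _ _

lemma PS_class (i : ℕ) : ∀ (v : V) (a : ℕ × ℕ × ℕ × V),
    (a ∈ (PS fO fI i v).1 ∨ a ∈ (PS fO fI i v).2) →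
    (a.1 = 1 ∨ a.1 = 2 ∨ a.1 = 3) ∧ 1 ≤ a.2.1 ∧ a.2.1 ≤ i := by
  induction i with
  | zero => intro v a h; simp [PS] at h
  | succ i ih =>
    intro v a h
    rcases h with h | h
    · rw [show (PS fO fI (i+1) v).1 = (PS fO fI i v).1 ++ (match fI (i+1) v with
          | some u => (1, i+1, 0, u) :: (PS fO fI i u).2
          | none => (List.range (2^i)).map fun j => (3, i+1, j, v)) from rfl] at h
      rcases List.mem_append.mp h with h | h
      · have := ih v a (Or.inl h)
        exact ⟨this.1, by omega⟩
      · rcases hI : fI (i+1) v with _ | u <;> rw [hI] at h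
        · simp only [List.mem_map, List.mem_range] at h
          obtain ⟨j, _, rfl⟩ := h
          refine ⟨by simp, by simp⟩
        · rcases List.mem_cons.mp h with rfl | h
          · refine ⟨by simp, by simp⟩
          · have := ih u a (Or.inr h)
            exact ⟨this.1, by omega⟩
    · rw [show (PS fO fI (i+1) v).2 = (match fO (i+1) v with
          | some w => (PS fO fI i w).1 ++ [(1, i+1, 0, v)]
          | none => (List.range (2^i)).map fun j => (2, i+1, j, v)) ++ (PS fO fI i v).2
          from rfl] at h
      rcases List.mem_append.mp h with h | h
      · rcases hO : fO (i+1) v with _ | w <;> rw [hO] at h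
        · simp only [List.mem_map, List.mem_range] at h
          obtain ⟨j, _, rfl⟩ := h
          refine ⟨by simp, by simp⟩
        · rcases List.mem_append.mp h with h | h
          · have := ih w a (Or.inl h)
            exact ⟨this.1, by omega⟩
          · rcases List.mem_singleton.mp h with rfl
            refine ⟨by simp, by simp⟩
      · have := ih v a (Or.inr h)
        exact ⟨this.1, by omega⟩

lemma PS_P_head (i : ℕ) (hi : 1 ≤ i) (v : V) :
    ∃ b r, (PS fO fI i v).1 = b :: r ∧ ((b : ℕ × ℕ × ℕ × V).1 = 1 ∨ b.1 = 3) := by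
  obtain ⟨r1, hr1⟩ := PS_P_prefix fO fI hi v
  rcases hI : fI 1 v with _ | u
  · have h1 : (PS fO fI 1 v).1 = [((3 : ℕ), (1 : ℕ), (0 : ℕ), v)] := by
      simp only [PS]
      rw [hI]
      rfl
    refine ⟨(3, 1, 0, v), r1, ?_, Or.inr rfl⟩
    rw [← hr1, h1]; rfl
  · have h1 : (PS fO fI 1 v).1 = [((1 : ℕ), (1 : ℕ), (0 : ℕ), u)] := by
      simp [PS, hI]
    refine ⟨(1, 1, 0, u), r1, ?_, Or.inl rfl⟩
    rw [← hr1, h1]; rfl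

lemma S_eq_P (hco : ∀ i u v, fO i u = some v ↔ fI i v = some u) {i : ℕ} {u v : V}
    (h : fO (i+1) u = some v) : (PS fO fI (i+1) u).2 = (PS fO fI (i+1) v).1 := by
  have h' : fI (i+1) v = some u := (hco _ _ _).mp h
  simp [PS, h, h']

/-- the label of a vertex -/
def lab (p : ℕ) (u : V) : List (ℕ × ℕ × ℕ × V) :=
  (PS fO fI p u).1 ++ (0, 0, 0, u) :: (PS fO fI p u).2

lemma lab_len (p : ℕ) (u : V) : (lab fO fI p u).length = 2^(p+1) - 1 := by
  have h2 : 1 ≤ 2^p := Nat.one_le_two_pow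
  simp [lab, (PS_len fO fI p u).1, (PS_len fO fI p u).2, pow_succ]
  omega

lemma getMid {β : Type*} (l₁ l₂ : List β) (a : β) : (l₁ ++ a :: l₂)[l₁.length]? = some a := by
  rw [List.getElem?_append_right le_rfl]
  simp

lemma lab_mid (p : ℕ) (u : V) : (lab fO fI p u)[2^p - 1]? = some (0, 0, 0, u) := by
  have := getMid (PS fO fI p u).1 (PS fO fI p u).2 ((0 : ℕ), (0 : ℕ), (0 : ℕ), u)
  rw [(PS_len fO fI p u).1] at this
  exact this

lemma window {β : Type*} {l₁ l₂ : List β} {k : ℕ}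
    (h : l₁.drop (l₁.length - k) = l₂.take k) {j : ℕ} (hj : j < k) :
    l₁[l₁.length - k + j]? = l₂[j]? := by
  have h2 := congrArg (fun l => l[j]?) h
  rw [List.getElem?_drop, List.getElem?_take, if_pos hj] at h2
  exact h2

lemma ov_of_arc (p : ℕ) (hco : ∀ i u v, fO i u = some v ↔ fI i v = some u)
    {i : ℕ} {u v : V} (hip : i < p) (h : fO (i+1) u = some v) :
    OvAt (lab fO fI p u) (lab fO fI p v) (2^(i+1) - 1) := by
  have h1 : 1 ≤ 2^i := Nat.one_le_two_pow
  have h2 : (2:ℕ)^(i+1) = 2^i * 2 := pow_succ 2 i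
  have h3 : (2:ℕ)^(i+1) ≤ 2^p := Nat.pow_le_pow_right (by norm_num) (by omega)
  have h4 : 1 ≤ (2:ℕ)^p := Nat.one_le_two_pow
  have h5 : (2:ℕ)^(p+1) = 2^p * 2 := pow_succ 2 p
  obtain ⟨r, hr⟩ := PS_P_prefix fO fI (show i+1 ≤ p from hip) v
  obtain ⟨w, hw⟩ := PS_S_suffix fO fI (show i+1 ≤ p from hip) u
  have hwlen : w.length = (2^p - 1) - (2^(i+1) - 1) := by
    have := congrArg List.length hw
    rw [List.length_append, (PS_len fO fI (i+1) u).2, (PS_len fO fI p u).2] at this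
    omega
  refine ⟨by omega, ?_, ?_, ?_⟩
  · rw [lab_len]; omega
  · rw [lab_len]; omega
  · have htake : (lab fO fI p v).take (2^(i+1) - 1) = (PS fO fI (i+1) v).1 := by
      rw [lab, ← hr, List.append_assoc]
      exact List.take_left' (PS_len fO fI (i+1) v).1
    have hlabu : lab fO fI p u
        = ((PS fO fI p u).1 ++ (0, 0, 0, u) :: w) ++ (PS fO fI (i+1) u).2 := by
      rw [lab, ← hw]; simp
    have hdrop : (lab fO fI p u).drop ((lab fO fI p u).length - (2^(i+1) - 1))
        = (PS fO fI (i+1) u).2 := by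
      rw [lab_len, hlabu]
      refine List.drop_left' ?_
      rw [List.length_append, (PS_len fO fI p u).1, List.length_cons, hwlen]
      omega
    rw [hdrop, htake, S_eq_P fO fI hco h]

lemma arc_of_ov (p : ℕ) (hco : ∀ i u v, fO i u = some v ↔ fI i v = some u)
    {u v : V} {k : ℕ} (huv : u ≠ v) (hov : OvAt (lab fO fI p u) (lab fO fI p v) k) :
    ∃ i, i < p ∧ fO (i+1) u = some v := by
  obtain ⟨hk0, hku, _, heq⟩ := hov
  rw [lab_len] at hku
  have h4 : 1 ≤ (2:ℕ)^p := Nat.one_le_two_pow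
  have h5 : (2:ℕ)^(p+1) = 2^p * 2 := pow_succ 2 p
  have hpt : ∀ j, j < k → (lab fO fI p u)[2^(p+1) - 1 - k + j]? = (lab fO fI p v)[j]? := by
    intro j hj
    have := window heq hj
    rw [lab_len] at this
    exact this
  by_cases hkL : k = 2^(p+1) - 1
  · exfalso
    have hj : 2^p - 1 < k := by omega
    have h := hpt (2^p - 1) hj
    have e1 : 2^(p+1) - 1 - k + (2^p - 1) = 2^p - 1 := by omega
    rw [e1, lab_mid, lab_mid] at h
    exact huv (by injection h with h'; exact congrArg (fun q => q.2.2.2) h')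
  · by_cases hk2p : 2^p ≤ k
    · exfalso
      have hj : k - 2^p < k := by omega
      have h := hpt (k - 2^p) hj
      have e1 : 2^(p+1) - 1 - k + (k - 2^p) = 2^p - 1 := by omega
      rw [e1, lab_mid] at h
      have hlt : k - 2^p < 2^p - 1 := by omega
      have hre : (lab fO fI p v)[k - 2^p]? = (PS fO fI p v).1[k - 2^p]? := by
        rw [lab, List.getElem?_append_left (by rw [(PS_len fO fI p v).1]; omega)]
      rw [hre, List.getElem?_eq_getElem (by rw [(PS_len fO fI p v).1]; omega)] at h
      have hb := List.getElem_mem (l := (PS fO fI p v).1) (n := k - 2^p)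
        (by rw [(PS_len fO fI p v).1]; omega)
      injection h with h'
      rw [← h'] at hb
      have := (PS_class fO fI p v _ (Or.inl hb)).1
      simp at this
    · -- k < 2^p : the nested-channel zone
      set i' := Nat.log 2 k with hi'
      set t := 2^i' with htdef
      have ht1 : t ≤ k := Nat.pow_log_le_self 2 (by omega)
      have ht2 : k < 2*t := by
        have := Nat.lt_pow_succ_log_self (by norm_num : 1 < 2) k
        rw [pow_succ, ← hi'] at this
        omega
      have ht0 : 1 ≤ t := Nat.one_le_two_pow
      have hi'p : i' < p := by
        by_contra hc
        push_neg at hc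
        have h6 : (2:ℕ)^p ≤ t := Nat.pow_le_pow_right (by norm_num) hc
        have h7 : 2^p ≤ k := le_trans h6 ht1
        exact hk2p h7
      have h2ti : (2:ℕ)^(i'+1) = 2*t := by rw [pow_succ]; omega
      have h8 : 2*t ≤ 2^p :=
        le_trans (le_of_eq h2ti.symm) (Nat.pow_le_pow_right (by norm_num) (by omega))
      obtain ⟨r, hr⟩ := PS_P_prefix fO fI (show i'+1 ≤ p by omega) v
      obtain ⟨w, hw⟩ := PS_S_suffix fO fI (show i'+1 ≤ p by omega) u
      have hwlen : w.length = (2^p - 1) - (2*t - 1) := by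
        have := congrArg List.length hw
        rw [List.length_append, (PS_len fO fI (i'+1) u).2, (PS_len fO fI p u).2, h2ti] at this
        omega
      have hlabu : lab fO fI p u
          = ((PS fO fI p u).1 ++ (0, 0, 0, u) :: w) ++ (PS fO fI (i'+1) u).2 := by
        rw [lab, ← hw]; simp
      have hlabv : lab fO fI p v
          = (PS fO fI (i'+1) v).1 ++ (r ++ (0, 0, 0, v) :: (PS fO fI p v).2) := by
        rw [lab, ← hr]; simp
      have hlen1 : ((PS fO fI p u).1 ++ (0, 0, 0, u) :: w).length = 2^(p+1) - 1 - (2*t-1) := by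
        rw [List.length_append, (PS_len fO fI p u).1, List.length_cons, hwlen]
        omega
      have hWin : ∀ j, j < k →
          (PS fO fI (i'+1) u).2[2*t - 1 - k + j]? = (PS fO fI (i'+1) v).1[j]? := by
        intro j hj
        have h := hpt j hj
        rw [hlabu, hlabv] at h
        rw [List.getElem?_append_right (by rw [hlen1]; omega)] at h
        rw [List.getElem?_append_left (by rw [(PS_len fO fI (i'+1) v).1, h2ti]; omega)] at h
        rw [hlen1] at h
        have e2 : 2^(p+1) - 1 - k + j - (2^(p+1) - 1 - (2*t-1)) = 2*t - 1 - k + j := by omega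
        rw [e2] at h
        exact h
      rcases hO : fO (i'+1) u with _ | v'
      · exfalso
        have h := hWin 0 hk0
        have hS : (PS fO fI (i'+1) u).2
            = ((List.range (2^i')).map fun j => ((2:ℕ), i'+1, j, u)) ++ (PS fO fI i' u).2 := by
          simp [PS, hO]
        rw [hS, List.getElem?_append_left
          (by rw [List.length_map, List.length_range]; omega)] at h
        rw [List.getElem?_map, List.getElem?_range (by omega : 2*t - 1 - k + 0 < 2^i')] at h
        obtain ⟨b, rb, hbv, hb13⟩ := PS_P_head fO fI (i'+1) (by omega) v
        rw [hbv] at h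
        simp only [List.getElem?_cons_zero, Option.map_some] at h
        injection h with h'
        rcases hb13 with h1 | h1 <;> rw [← h'] at h1 <;> simp at h1
      · have hS : (PS fO fI (i'+1) u).2
            = ((PS fO fI i' v').1 ++ [((1:ℕ), i'+1, (0:ℕ), u)]) ++ (PS fO fI i' u).2 := by
          simp [PS, hO]
        have hj0 : k - t < k := by omega
        have h := hWin (k - t) hj0
        have e3 : 2*t - 1 - k + (k - t) = t - 1 := by omega
        rw [e3, hS] at h
        rw [List.getElem?_append_left
          (by rw [List.length_append, (PS_len fO fI i' v').1, List.length_singleton]; omega)] at h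
        have hmid : ((PS fO fI i' v').1 ++ [((1:ℕ), i'+1, (0:ℕ), u)])[t-1]? = some (1, i'+1, 0, u) := by
          have := getMid (PS fO fI i' v').1 ([] : List (ℕ × ℕ × ℕ × V)) ((1:ℕ), i'+1, (0:ℕ), u)
          rw [(PS_len fO fI i' v').1] at this
          exact this
        rw [hmid] at h
        by_cases hke : k = 2*t - 1
        · rcases hIv : fI (i'+1) v with _ | u''
          · exfalso
            have hPv : (PS fO fI (i'+1) v).1
                = (PS fO fI i' v).1 ++ ((List.range (2^i')).map fun j => ((3:ℕ), i'+1, j, v)) := by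
              simp [PS, hIv]
            rw [hPv] at h
            rw [List.getElem?_append_right (by rw [(PS_len fO fI i' v).1]; omega)] at h
            rw [(PS_len fO fI i' v).1] at h
            have e4 : k - t - (t - 1) = 0 := by omega
            rw [e4, List.getElem?_map, List.getElem?_range (by omega : 0 < 2^i')] at h
            simp only [Option.map_some] at h
            injection h with h'
            simp at h'
          · have hPv : (PS fO fI (i'+1) v).1
                = (PS fO fI i' v).1 ++ (((1:ℕ), i'+1, (0:ℕ), u'') :: (PS fO fI i' u'').2) := by
              simp [PS, hIv]
            rw [hPv] at h
            rw [List.getElem?_append_right (by rw [(PS_len fO fI i' v).1]; omega)] at h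
            rw [(PS_len fO fI i' v).1] at h
            have e4 : k - t - (t - 1) = 0 := by omega
            rw [e4] at h
            simp only [List.getElem?_cons_zero] at h
            injection h with h'
            have huu : u = u'' := congrArg (fun q : ℕ × ℕ × ℕ × V => q.2.2.2) h'
            subst huu
            have : fO (i'+1) u = some v := (hco _ _ _).mpr hIv
            exact ⟨i', hi'p, this⟩
        · exfalso
          -- k - t < t - 1 : the x-letter lands inside P_{i'} v, impossible by class
          obtain ⟨r2, hr2⟩ := PS_P_prefix fO fI (show i' ≤ i'+1 by omega) v
          rw [← hr2] at h
          rw [List.getElem?_append_left (by rw [(PS_len fO fI i' v).1]; omega)] at h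
          rw [List.getElem?_eq_getElem (by rw [(PS_len fO fI i' v).1]; omega)] at h
          have hb := List.getElem_mem (l := (PS fO fI i' v).1) (n := k - t)
            (by rw [(PS_len fO fI i' v).1]; omega)
          injection h with h'
          rw [← h'] at hb
          have hcl : ((1:ℕ), i'+1, (0:ℕ), u).2.1 ≤ i' := (PS_class fO fI i' v _ (Or.inl hb)).2.2
          have : i' + 1 ≤ i' := hcl
          omega

end Strings


/-- Every finite digraph has an injective overlap labeling of length at most `2^(p+1) - 1`,
where `p = max{Δ⁺, Δ⁻}`; in particular readability is well defined. -/
theorem injective_overlap_labeling_exists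
    {V : Type} [Fintype V] (A : V → V → Prop) (p : ℕ)
    (hp : p = max (Finset.univ.sup fun u => Nat.card {v // A u v})
                  (Finset.univ.sup fun v => Nat.card {u // A u v})) :
    ∃ (α : Type) (ℓ : V → List α),
      Function.Injective ℓ ∧
      (∀ u, (ℓ u).length ≤ 2 ^ (p + 1) - 1) ∧
      (∀ u v, u ≠ v → (A u v ↔ Overlaps (ℓ u) (ℓ v))) := by
  classical
  set s : Finset (V × V × ℕ) :=
    ((Finset.univ : Finset (V × V)).filter fun q => A q.1 q.2 ∧ q.1 ≠ q.2).image
      (fun q => (q.1, q.2, 0)) with hsdef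
  have hmem : ∀ u v : V, (u, v, 0) ∈ s ↔ (A u v ∧ u ≠ v) := by
    intro u v
    rw [hsdef]
    simp only [Finset.mem_image, Finset.mem_filter, Finset.mem_univ, true_and]
    constructor
    · rintro ⟨⟨a, b⟩, hab, heq⟩
      have h1 : a = u := congrArg (fun q : V × V × ℕ => q.1) heq
      have h2 : b = v := congrArg (fun q : V × V × ℕ => q.2.1) heq
      subst h1; subst h2
      exact hab
    · intro h
      exact ⟨(u, v), h, rfl⟩
  have h0 : ∀ e ∈ s, e.2.2 = 0 := by
    intro e he
    rw [hsdef] at he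
    simp only [Finset.mem_image] at he
    obtain ⟨q, _, rfl⟩ := he
    rfl
  have hes : ∀ e ∈ s, A e.1 e.2.1 ∧ e.1 ≠ e.2.1 := by
    intro e he
    rw [hsdef] at he
    simp only [Finset.mem_image, Finset.mem_filter, Finset.mem_univ, true_and] at he
    obtain ⟨q, hq, rfl⟩ := he
    exact hq
  have hdeg_out : ∀ u, odeg s u ≤ p := by
    intro u
    have h1 : odeg s u ≤ #(Finset.univ.filter fun v => A u v) := by
      rw [odeg]
      apply Finset.card_le_card_of_injOn (fun e => e.2.1)
      · intro e he
        rcases Finset.mem_filter.mp he with ⟨he1, he2⟩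
        have := hes e he1
        rw [he2] at this
        simp only [Finset.coe_filter, Set.mem_setOf_eq, Finset.mem_filter, Finset.mem_univ, true_and]
        exact this.1
      · intro e he e' he' hsnd
        rcases Finset.mem_filter.mp he with ⟨he1, he2⟩
        rcases Finset.mem_filter.mp he' with ⟨he1', he2'⟩
        have hz := h0 e he1
        have hz' := h0 e' he1'
        ext
        · rw [he2, he2']
        · exact hsnd
        · rw [hz, hz']
    have h2 : #(Finset.univ.filter fun v => A u v) = Nat.card {v // A u v} := by
      rw [Nat.card_eq_fintype_card, Fintype.card_subtype]
    have h3 : Nat.card {v // A u v} ≤ p := by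
      rw [hp]
      have h4 : Nat.card {v // A u v} ≤ Finset.univ.sup fun u => Nat.card {v // A u v} :=
        Finset.le_sup (f := fun u => Nat.card {v // A u v}) (Finset.mem_univ u)
      exact le_trans h4 (le_max_left _ _)
    omega
  have hdeg_in : ∀ v, ideg s v ≤ p := by
    intro v
    have h1 : ideg s v ≤ #(Finset.univ.filter fun u => A u v) := by
      rw [ideg]
      apply Finset.card_le_card_of_injOn (fun e => e.1)
      · intro e he
        rcases Finset.mem_filter.mp he with ⟨he1, he2⟩
        have := hes e he1
        rw [he2] at this
        simp only [Finset.coe_filter, Set.mem_setOf_eq, Finset.mem_filter, Finset.mem_univ, true_and]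
        exact this.1
      · intro e he e' he' hfst
        rcases Finset.mem_filter.mp he with ⟨he1, he2⟩
        rcases Finset.mem_filter.mp he' with ⟨he1', he2'⟩
        have hz := h0 e he1
        have hz' := h0 e' he1'
        ext
        · exact hfst
        · rw [he2, he2']
        · rw [hz, hz']
    have h2 : #(Finset.univ.filter fun u => A u v) = Nat.card {u // A u v} := by
      rw [Nat.card_eq_fintype_card, Fintype.card_subtype]
    have h3 : Nat.card {u // A u v} ≤ p := by
      rw [hp]
      have h4 : Nat.card {u // A u v} ≤ Finset.univ.sup fun v => Nat.card {u // A u v} :=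
        Finset.le_sup (f := fun v => Nat.card {u // A u v}) (Finset.mem_univ v)
      exact le_trans h4 (le_max_right _ _)
    omega
  obtain ⟨c, hclt, hcprop⟩ := konig p s h0 hdeg_out hdeg_in
  have hcol_fst : ∀ u v v', A u v → u ≠ v → A u v' → u ≠ v' →
      c (u, v, 0) = c (u, v', 0) → v = v' := by
    intro u v v' h1 h2 h3 h4 h5
    have := hcprop (u, v, 0) ((hmem u v).mpr ⟨h1, h2⟩) (u, v', 0)
      ((hmem u v').mpr ⟨h3, h4⟩) h5 (Or.inl rfl)
    exact congrArg (fun q : V × V × ℕ => q.2.1) this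
  have hcol_snd : ∀ v u u', A u v → u ≠ v → A u' v → u' ≠ v →
      c (u, v, 0) = c (u', v, 0) → u = u' := by
    intro v u u' h1 h2 h3 h4 h5
    have := hcprop (u, v, 0) ((hmem u v).mpr ⟨h1, h2⟩) (u', v, 0)
      ((hmem u' v).mpr ⟨h3, h4⟩) h5 (Or.inr rfl)
    exact congrArg (fun q : V × V × ℕ => q.1) this
  set fO : ℕ → V → Option V := fun i u =>
    if h : ∃ v, A u v ∧ u ≠ v ∧ c (u, v, 0) + 1 = i then some h.choose else none with hfOdef
  set fI : ℕ → V → Option V := fun i v =>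
    if h : ∃ u, A u v ∧ u ≠ v ∧ c (u, v, 0) + 1 = i then some h.choose else none with hfIdef
  have hfO : ∀ i u v, fO i u = some v → A u v ∧ u ≠ v ∧ c (u, v, 0) + 1 = i := by
    intro i u v h
    rw [hfOdef] at h
    simp only at h
    split at h
    · rename_i hex
      have hs2 := hex.choose_spec
      injection h with h'
      rw [h'] at hs2
      exact hs2
    · exact absurd h (by simp)
  have hfI : ∀ i v u, fI i v = some u → A u v ∧ u ≠ v ∧ c (u, v, 0) + 1 = i := by
    intro i v u h
    rw [hfIdef] at h
    simp only at h
    split at h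
    · rename_i hex
      have hs2 := hex.choose_spec
      injection h with h'
      rw [h'] at hs2
      exact hs2
    · exact absurd h (by simp)
  have hfO_some : ∀ u v, A u v → u ≠ v → fO (c (u, v, 0) + 1) u = some v := by
    intro u v hA hne
    have hex : ∃ v', A u v' ∧ u ≠ v' ∧ c (u, v', 0) + 1 = c (u, v, 0) + 1 :=
      ⟨v, hA, hne, rfl⟩
    rw [hfOdef]
    simp only
    rw [dif_pos hex]
    have hs2 := hex.choose_spec
    have : hex.choose = v :=
      hcol_fst u _ v hs2.1 hs2.2.1 hA hne (by omega)
    rw [this]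
  have hfI_some : ∀ u v, A u v → u ≠ v → fI (c (u, v, 0) + 1) v = some u := by
    intro u v hA hne
    have hex : ∃ u', A u' v ∧ u' ≠ v ∧ c (u', v, 0) + 1 = c (u, v, 0) + 1 :=
      ⟨u, hA, hne, rfl⟩
    rw [hfIdef]
    simp only
    rw [dif_pos hex]
    have hs2 := hex.choose_spec
    have : hex.choose = u :=
      hcol_snd v _ u hs2.1 hs2.2.1 hA hne (by omega)
    rw [this]
  have hcompat : ∀ i u v, fO i u = some v ↔ fI i v = some u := by
    intro i u v
    constructor
    · intro h
      obtain ⟨hA, hne, hc⟩ := hfO i u v h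
      rw [← hc]
      exact hfI_some u v hA hne
    · intro h
      obtain ⟨hA, hne, hc⟩ := hfI i v u h
      rw [← hc]
      exact hfO_some u v hA hne
  refine ⟨ℕ × ℕ × ℕ × V, lab fO fI p, ?_, ?_, ?_⟩
  · intro u v h
    have h2 := congrArg (fun l : List (ℕ × ℕ × ℕ × V) => l[2^p - 1]?) h
    rw [lab_mid, lab_mid] at h2
    injection h2 with h'
    exact congrArg (fun q : ℕ × ℕ × ℕ × V => q.2.2.2) h'
  · intro u
    rw [lab_len]
  · intro u v hne
    constructor
    · intro hA
      have h1 := hfO_some u v hA hne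
      have hclt2 := hclt (u, v, 0) ((hmem u v).mpr ⟨hA, hne⟩)
      exact ⟨2^(c (u, v, 0) + 1) - 1, ov_of_arc fO fI p hcompat hclt2 h1⟩
    · rintro ⟨k, hk⟩
      obtain ⟨i, _, hfo⟩ := arc_of_ov fO fI p hcompat hne hk
      exact (hfO _ _ _ hfo).1
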